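/- Let X be a finite set of cardinality n, let π and π̃ be probability distributions on X with ‖π̃ − π‖_TV ≤ p/(8n) for some p ∈ {1, …, n}, and let L ⊆ X be the random set obtained by drawing 120·p independent samples from π̃ (and removing duplicates). Then Pr(π(L) ≥ p/(8n)) ≥ 9/10. -/

import Mathlib

open Finset

private lemma aux_factor {X : Type*} [Fintype X] (m : ℕ) (g : X → ℝ) :
    ∑ f : Fin m → X, ∏ i, g (f i) = (∑ x, g x) ^ m := by
  classical
  calc ∑ f : Fin m → X, ∏ i, g (f i)
      = ∑ f ∈ Fintype.piFinset (fun _ : Fin m => (univ : Finset X)), ∏ i, g (f i) := by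
        rw [Fintype.piFinset_univ]
    _ = ∏ _i : Fin m, ∑ x, g x := (Finset.prod_univ_sum _ _).symm
    _ = (∑ x, g x) ^ m := by simp

open scoped Classical in
private lemma aux_miss {X : Type*} [Fintype X] [DecidableEq X] (m : ℕ) (πt : X → ℝ)
    (A : Finset X) :
    ∑ f : Fin m → X, (∏ i, πt (f i)) * (if ∀ i, f i ∉ A then (1:ℝ) else 0)
      = (∑ x ∈ univ \ A, πt x) ^ m := by
  have key : ∀ f : Fin m → X,
      (∏ i, πt (f i)) * (if ∀ i, f i ∉ A then (1:ℝ) else 0)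
        = ∏ i, (if f i ∈ A then 0 else πt (f i)) := by
    intro f
    by_cases h : ∀ i, f i ∉ A
    · rw [if_pos h, mul_one]
      exact Finset.prod_congr rfl (fun i _ => by rw [if_neg (h i)])
    · rw [if_neg h, mul_zero]
      push_neg at h
      obtain ⟨i, hi⟩ := h
      exact (Finset.prod_eq_zero (Finset.mem_univ i) (by rw [if_pos hi])).symm
  rw [Finset.sum_congr rfl (fun f _ => key f),
    aux_factor m (fun x => if x ∈ A then 0 else πt x)]
  congr 1
  rw [Finset.sum_ite, Finset.sum_const_zero, zero_add]
  exact Finset.sum_congr (by ext x; simp [Finset.mem_sdiff, Finset.mem_filter]) (fun _ _ => rfl)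
open Finset

private lemma auxA (k : ℕ) (a : ℝ) (h0 : 0 ≤ a) (h1 : a ≤ 1) :
    (1 - a) ^ (4 * k) * (1 + (k:ℝ) * a) ^ 4 ≤ 1 := by
  have hb : (0:ℝ) ≤ 1 - a := by linarith
  have h2 : (1 - a) ^ k * (1 + (k:ℝ) * a) ≤ 1 := by
    have hB : 1 + (k:ℝ) * a ≤ (1 + a) ^ k := by
      have := one_add_mul_le_pow (a := a) (by linarith) k
      linarith
    calc (1 - a) ^ k * (1 + (k:ℝ) * a) ≤ (1 - a) ^ k * (1 + a) ^ k :=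
          mul_le_mul_of_nonneg_left hB (pow_nonneg hb k)
      _ = ((1 - a) * (1 + a)) ^ k := (mul_pow _ _ _).symm
      _ = (1 - a ^ 2) ^ k := by ring_nf
      _ ≤ 1 := pow_le_one₀ (by nlinarith) (by nlinarith)
  have h3 : (0:ℝ) ≤ (1 - a) ^ k * (1 + (k:ℝ) * a) := by positivity
  calc (1 - a) ^ (4 * k) * (1 + (k:ℝ) * a) ^ 4
      = ((1 - a) ^ k * (1 + (k:ℝ) * a)) ^ 4 := by
        rw [mul_pow, ← pow_mul, Nat.mul_comm]
    _ ≤ 1 ^ 4 := pow_le_pow_left₀ h3 h2 4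
    _ = 1 := one_pow 4

private lemma auxI (t : ℝ) (h1 : 1 ≤ t) (h2 : t ≤ 15) :
    10 ≤ (1 - t / 30) * (1 + t) ^ 4 := by
  nlinarith [mul_nonneg (sub_nonneg.2 h1) (sub_nonneg.2 h2), sq_nonneg (t-1), sq_nonneg (t-15), mul_nonneg (mul_nonneg (sub_nonneg.2 h1) (sub_nonneg.2 h1)) (sub_nonneg.2 h2), pow_le_pow_left₀ (by linarith : (0:ℝ) ≤ 2) (by linarith : (2:ℝ) ≤ 1 + t) 4]

private lemma auxJ : (3/4 : ℝ) ^ 120 ≤ 1 / 10 := by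
  norm_num

set_option maxHeartbeats 2000000 in
open Finset in
open scoped Classical in
/-- Proposition 4.4 / `prp:M_measure`, with `c = 120`.
Let `X` be a finite set of cardinality `n`, let `π` and `π̃` be probability distributions
on `X` with `‖π̃ − π‖_TV ≤ p/(8n)` for some `p ∈ {1, …, n}`, and let `L ⊆ X` be the random
set obtained by drawing `120·p` independent samples from `π̃` (removing duplicates).
Then `Pr(π(L) ≥ p/(8n)) ≥ 9/10`.  The probability is written out explicitly as a sum,
over all tuples of samples, of the product of their `π̃`-probabilities. -/
theorem stmt2 {X : Type*} [Fintype X] [DecidableEq X] (n : ℕ) (hcard : Fintype.card X = n)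
    (π πt : X → ℝ) (hπ : ∀ x, 0 ≤ π x) (hπsum : ∑ x, π x = 1)
    (hπt : ∀ x, 0 ≤ πt x) (hπtsum : ∑ x, πt x = 1)
    (p : ℕ) (hp1 : 1 ≤ p) (hpn : p ≤ n)
    (hTV : (1 / 2) * ∑ u, |πt u - π u| ≤ (p : ℝ) / (8 * n)) :
    (9 : ℝ) / 10 ≤
      ∑ f : Fin (120 * p) → X,
        (if (p : ℝ) / (8 * n) ≤ ∑ u ∈ Finset.image f Finset.univ, π u
          then ∏ i, πt (f i) else 0) := by
  classical
  set m := 120 * p with hm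
  have hn1 : 1 ≤ n := le_trans hp1 hpn
  have hnR : (0:ℝ) < n := by exact_mod_cast Nat.pos_of_ne_zero (by omega)
  have hpR : (0:ℝ) < p := by exact_mod_cast hp1
  have hpnR : (p:ℝ) ≤ n := by exact_mod_cast hpn
  set q : ℝ := (p:ℝ) / (4 * n) with hqdef
  have hq0 : 0 < q := by rw [hqdef]; positivity
  clear_value q
  have hq14 : q ≤ 1/4 := by
    rw [hqdef, div_le_iff₀ (by positivity)]; nlinarith
  set P : (Fin m → X) → ℝ := fun f => ∏ i, πt (f i) with hPdef
  have hP0 : ∀ f, 0 ≤ P f := fun f => Finset.prod_nonneg (fun i _ => hπt _)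
  have hPsum : ∑ f : Fin m → X, P f = 1 := by
    rw [hPdef]; rw [aux_factor m πt, hπtsum, one_pow]
  set L : (Fin m → X) → Finset X := fun f => Finset.image f Finset.univ with hLdef
  have hπt1 : ∀ x, πt x ≤ 1 := by
    intro x
    calc πt x ≤ ∑ y, πt y := Finset.single_le_sum (fun y _ => hπt y) (Finset.mem_univ x)
      _ = 1 := hπtsum
  -- TV step
  have hTVset : ∀ A : Finset X, ∑ x ∈ A, πt x - ∑ x ∈ A, π x ≤ (p:ℝ)/(8*n) := by
    intro A
    have h1 : ∑ x ∈ A, (πt x - π x) ≤ ∑ x ∈ A, |πt x - π x| :=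
      Finset.sum_le_sum (fun x _ => le_abs_self _)
    have h2 : - ∑ x ∈ univ \ A, (πt x - π x) ≤ ∑ x ∈ univ \ A, |πt x - π x| := by
      rw [← Finset.sum_neg_distrib]
      exact Finset.sum_le_sum (fun x _ => neg_le_abs _)
    have h3 : ∑ x ∈ A, (πt x - π x) + ∑ x ∈ univ \ A, (πt x - π x) = 0 := by
      rw [Finset.sum_sdiff_eq_sub (Finset.subset_univ A)]
      have : ∑ x, (πt x - π x) = 0 := by
        rw [Finset.sum_sub_distrib, hπtsum, hπsum]; ring
      rw [this]; ring
    have h4 : ∑ x ∈ A, |πt x - π x| + ∑ x ∈ univ \ A, |πt x - π x| = ∑ x, |πt x - π x| := by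
      rw [Finset.sum_sdiff_eq_sub (Finset.subset_univ A)]; ring
    have h5 : ∑ x ∈ A, (πt x - π x) = ∑ x ∈ A, πt x - ∑ x ∈ A, π x :=
      Finset.sum_sub_distrib _ _
    linarith
  -- reduction to bad event
  suffices hbad : ∑ f : Fin m → X, (if (∑ x ∈ L f, πt x) < q then P f else 0) ≤ 1/10 by
    have hsplit : ∀ f : Fin m → X,
        (if (p:ℝ)/(8*n) ≤ ∑ u ∈ L f, π u then ∏ i, πt (f i) else 0)
          = P f - (if (p:ℝ)/(8*n) ≤ ∑ u ∈ L f, π u then 0 else P f) := by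
      intro f
      by_cases h : (p:ℝ)/(8*n) ≤ ∑ u ∈ L f, π u
      · rw [if_pos h, if_pos h, hPdef]; ring
      · rw [if_neg h, if_neg h]; ring
    have hmono : ∀ f : Fin m → X,
        (if (p:ℝ)/(8*n) ≤ ∑ u ∈ L f, π u then (0:ℝ) else P f)
          ≤ (if (∑ x ∈ L f, πt x) < q then P f else 0) := by
      intro f
      by_cases h : (p:ℝ)/(8*n) ≤ ∑ u ∈ L f, π u
      · rw [if_pos h]
        by_cases hb : (∑ x ∈ L f, πt x) < q
        · rw [if_pos hb]; exact hP0 f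
        · rw [if_neg hb]
      · rw [if_neg h]
        have hlt : ∑ x ∈ L f, πt x < q := by
          by_contra hge
          push_neg at hge
          have htv := hTVset (L f)
          have hq2 : q = 2 * ((p:ℝ)/(8*n)) := by rw [hqdef]; ring
          exact h (by linarith)
        rw [if_pos hlt]
    have h1 : ∑ f : Fin m → X, (if (p:ℝ)/(8*n) ≤ ∑ u ∈ L f, π u then ∏ i, πt (f i) else 0)
        = 1 - ∑ f : Fin m → X, (if (p:ℝ)/(8*n) ≤ ∑ u ∈ L f, π u then (0:ℝ) else P f) := by
      rw [Finset.sum_congr rfl (fun f _ => hsplit f), Finset.sum_sub_distrib, hPsum]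
    rw [h1]
    have h2 : ∑ f : Fin m → X, (if (p:ℝ)/(8*n) ≤ ∑ u ∈ L f, π u then (0:ℝ) else P f) ≤ 1/10 :=
      le_trans (Finset.sum_le_sum (fun f _ => hmono f)) hbad
    linarith
  -- shared quantities
  have hMiss : ∀ A : Finset X,
      ∑ f : Fin m → X, P f * (if ∀ i, f i ∉ A then (1:ℝ) else 0)
        = (1 - ∑ x ∈ A, πt x)^m := by
    intro A
    rw [hPdef, aux_miss m πt A, Finset.sum_sdiff_eq_sub (Finset.subset_univ A), hπtsum]
  have hNx : ∀ x : X, ∑ f : Fin m → X, P f * (if x ∈ L f then 0 else 1) = (1 - πt x)^m := by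
    intro x
    have h1 : ∀ f : Fin m → X, (if x ∈ L f then (0:ℝ) else 1)
        = (if ∀ i, f i ∉ ({x} : Finset X) then (1:ℝ) else 0) := by
      intro f
      have : (∀ i, f i ∉ ({x} : Finset X)) ↔ ¬ (x ∈ L f) := by
        simp [hLdef, Finset.mem_image, eq_comm]
      by_cases hx : x ∈ L f
      · rw [if_pos hx, if_neg (by rw [this]; exact not_not_intro hx)]
      · rw [if_neg hx, if_pos (this.2 hx)]
    rw [Finset.sum_congr rfl (fun f _ => by rw [h1 f]), hMiss {x}, Finset.sum_singleton]
  have hM01 : ∀ x : X, 0 ≤ (1 - πt x)^m ∧ (1 - πt x)^m ≤ 1 := by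
    intro x
    constructor
    · exact pow_nonneg (by linarith [hπt1 x]) m
    · exact pow_le_one₀ (by linarith [hπt1 x]) (by linarith [hπt x])
  set B : ℝ := 1 + 15 * (p:ℝ) / n with hBdef
  clear_value B
  have hB1 : 1 ≤ B := by
    rw [hBdef]
    have h15 : 0 ≤ 15 * (p:ℝ)/n := by positivity
    linarith
  have hB4 : (0:ℝ) < B^4 := pow_pos (by linarith) 4
  have hMx : ∀ a : ℝ, 1/(2*(n:ℝ)) ≤ a → a ≤ 1 → (1-a)^m ≤ 1/B^4 := by
    intro a hal hau
    have ha0 : 0 ≤ a := le_trans (by positivity) hal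
    have hA := auxA (30*p) a ha0 hau
    have hm4 : m = 4 * (30 * p) := by rw [hm]; ring
    have hk : ((30*p : ℕ) : ℝ) = 30 * (p:ℝ) := by push_cast; ring
    rw [hk] at hA
    have hBa : B ≤ 1 + 30 * (p:ℝ) * a := by
      rw [hBdef]
      have hal' : 1 ≤ 2*(n:ℝ)*a := by
        rw [div_le_iff₀ (by positivity)] at hal; linarith
      have : 15 * (p:ℝ) / n ≤ 30 * (p:ℝ) * a := by
        rw [div_le_iff₀ hnR]
        nlinarith
      linarith
    have hBa0 : (0:ℝ) < 1 + 30 * (p:ℝ) * a := by nlinarith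
    have h1 : (1-a)^m ≤ 1/(1 + 30*(p:ℝ)*a)^4 := by
      rw [le_div_iff₀ (by positivity), hm4]
      exact hA
    have h2 : (1:ℝ)/(1 + 30*(p:ℝ)*a)^4 ≤ 1/B^4 := by
      apply one_div_le_one_div_of_le hB4
      exact pow_le_pow_left₀ (by linarith) hBa 4
    linarith
  -- T and σ
  set T : Finset X := univ.filter (fun x => 1/(2*(n:ℝ)) ≤ πt x) with hTdef
  set σ : ℝ := ∑ x ∈ T, πt x with hσdef
  clear_value σ
  have hσhalf : 1/2 ≤ σ := by
    have hsplit : σ + ∑ x ∈ univ.filter (fun x => ¬ (1/(2*(n:ℝ)) ≤ πt x)), πt x = 1 := by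
      rw [hσdef, hTdef, Finset.sum_filter_add_sum_filter_not, hπtsum]
    have hb : ∑ x ∈ univ.filter (fun x => ¬ (1/(2*(n:ℝ)) ≤ πt x)), πt x ≤ 1/2 := by
      have h1 : ∑ x ∈ univ.filter (fun x => ¬ (1/(2*(n:ℝ)) ≤ πt x)), πt x
          ≤ ∑ _x ∈ univ.filter (fun x => ¬ (1/(2*(n:ℝ)) ≤ πt x)), 1/(2*(n:ℝ)) :=
        Finset.sum_le_sum (fun x hx => by
          have := (Finset.mem_filter.1 hx).2
          linarith [lt_of_not_ge this])
      have h2 : ∑ _x ∈ univ.filter (fun x => ¬ (1/(2*(n:ℝ)) ≤ πt x)), 1/(2*(n:ℝ))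
          = (univ.filter (fun x => ¬ (1/(2*(n:ℝ)) ≤ πt x))).card * (1/(2*(n:ℝ))) := by
        rw [Finset.sum_const, nsmul_eq_mul]
      have h3 : ((univ.filter (fun x => ¬ (1/(2*(n:ℝ)) ≤ πt x))).card : ℝ) ≤ n := by
        have := Finset.card_filter_le (univ : Finset X) (fun x => ¬ (1/(2*(n:ℝ)) ≤ πt x))
        rw [Finset.card_univ, hcard] at this
        exact_mod_cast this
      have h4 : ((univ.filter (fun x => ¬ (1/(2*(n:ℝ)) ≤ πt x))).card : ℝ) * (1/(2*(n:ℝ))) ≤ 1/2 := by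
        rw [mul_one_div, div_le_div_iff₀ (by positivity) (by norm_num)]
        linarith
      linarith
    linarith
  by_cases hcase : (n:ℝ) ≤ 15 * p
  · -- Case I
    set c : ℝ := σ - q with hcdef
    clear_value c
    have hc0 : (0:ℝ) < c := by rw [hcdef]; linarith
    set W : (Fin m → X) → ℝ := fun f => ∑ x ∈ T, πt x * (if x ∈ L f then 0 else 1) with hWdef
    have hW0 : ∀ f, 0 ≤ W f := fun f => Finset.sum_nonneg (fun x _ =>
      mul_nonneg (hπt x) (by split <;> norm_num))
    have hWbad : ∀ f : Fin m → X, (∑ x ∈ L f, πt x) < q → c ≤ W f := by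
      intro f hf
      have hWeq : W f = σ - ∑ x ∈ T, πt x * (if x ∈ L f then 1 else 0) := by
        rw [hWdef, hσdef, ← Finset.sum_sub_distrib]
        apply Finset.sum_congr rfl
        intro x _
        by_cases h : x ∈ L f
        · rw [if_pos h, if_pos h]; ring
        · rw [if_neg h, if_neg h]; ring
      have hsub : ∑ x ∈ T, πt x * (if x ∈ L f then 1 else 0) ≤ ∑ x ∈ L f, πt x := by
        have e0 : ∀ x : X, πt x * (if x ∈ L f then (1:ℝ) else 0) = (if x ∈ L f then πt x else 0) := by
          intro x
          by_cases h : x ∈ L f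
          · rw [if_pos h, if_pos h]; ring
          · rw [if_neg h, if_neg h]; ring
        rw [Finset.sum_congr rfl (fun x _ => e0 x)]
        calc ∑ x ∈ T, (if x ∈ L f then πt x else 0)
            ≤ ∑ x ∈ (univ : Finset X), (if x ∈ L f then πt x else 0) :=
              Finset.sum_le_sum_of_subset_of_nonneg (Finset.subset_univ T)
                (fun x _ _ => by
                  by_cases h : x ∈ L f
                  · rw [if_pos h]; exact hπt x
                  · rw [if_neg h])
          _ = ∑ x ∈ L f, πt x := by rw [Finset.sum_ite_mem, Finset.univ_inter]
      rw [hcdef, hWeq]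
      linarith
    have hmark : ∑ f : Fin m → X, (if (∑ x ∈ L f, πt x) < q then P f else 0)
        ≤ ∑ f : Fin m → X, P f * (W f / c) := by
      apply Finset.sum_le_sum
      intro f _
      by_cases h : (∑ x ∈ L f, πt x) < q
      · rw [if_pos h]
        have h1 : 1 ≤ W f / c := (one_le_div hc0).2 (hWbad f h)
        exact le_mul_of_one_le_right (hP0 f) h1
      · rw [if_neg h]
        exact mul_nonneg (hP0 f) (div_nonneg (hW0 f) hc0.le)
    have hEW : ∑ f : Fin m → X, P f * W f = ∑ x ∈ T, πt x * (1 - πt x)^m := by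
      calc ∑ f : Fin m → X, P f * W f
          = ∑ f : Fin m → X, ∑ x ∈ T, πt x * (P f * (if x ∈ L f then 0 else 1)) :=
            Finset.sum_congr rfl (fun f _ => by
              rw [hWdef, Finset.mul_sum]
              exact Finset.sum_congr rfl (fun x _ => by ring))
        _ = ∑ x ∈ T, ∑ f : Fin m → X, πt x * (P f * (if x ∈ L f then 0 else 1)) :=
            Finset.sum_comm
        _ = ∑ x ∈ T, πt x * (1 - πt x)^m :=
            Finset.sum_congr rfl (fun x _ => by rw [← Finset.mul_sum, hNx x])
    have hEWle : ∑ x ∈ T, πt x * (1 - πt x)^m ≤ σ * (1/B^4) := by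
      rw [hσdef, Finset.sum_mul]
      apply Finset.sum_le_sum
      intro x hx
      have hxT : 1/(2*(n:ℝ)) ≤ πt x := (Finset.mem_filter.1 hx).2
      exact mul_le_mul_of_nonneg_left (hMx (πt x) hxT (hπt1 x)) (hπt x)
    have hauxI : (10:ℝ) ≤ (1 - 2*q) * B^4 := by
      have ht1 : 1 ≤ 15*(p:ℝ)/n := by rw [le_div_iff₀ hnR]; linarith
      have ht15 : 15*(p:ℝ)/n ≤ 15 := by rw [div_le_iff₀ hnR]; nlinarith
      have hI := auxI (15*(p:ℝ)/n) ht1 ht15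
      have h2q : (1:ℝ) - 2*q = 1 - (15*(p:ℝ)/n)/30 := by rw [hqdef]; ring
      rw [h2q, hBdef]
      exact hI
    have hfin : σ * (1/B^4) / c ≤ 1/10 := by
      have hσ0 : (0:ℝ) ≤ σ := by linarith
      have key : 10 * σ ≤ (σ - q) * B^4 := by
        nlinarith [mul_nonneg hσ0 (sub_nonneg.2 hauxI),
          mul_nonneg (mul_nonneg hq0.le (by linarith : (0:ℝ) ≤ 2*σ-1)) hB4.le]
      rw [mul_one_div, div_div, div_le_iff₀ (by positivity), hcdef]
      nlinarith [key]
    calc ∑ f : Fin m → X, (if (∑ x ∈ L f, πt x) < q then P f else 0)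
        ≤ ∑ f : Fin m → X, P f * (W f / c) := hmark
      _ = (∑ f : Fin m → X, P f * W f) / c := by
          rw [Finset.sum_div]
          exact Finset.sum_congr rfl (fun f _ => by rw [mul_div_assoc])
      _ ≤ σ * (1/B^4) / c := (div_le_div_iff_of_pos_right hc0).2 (by rw [hEW]; exact hEWle)
      _ ≤ 1/10 := hfin
  · -- Case II
    push_neg at hcase
    set H : Finset X := univ.filter (fun x => q ≤ πt x) with hHdef
    set σH : ℝ := ∑ x ∈ H, πt x with hσHdef
    have hσH0 : 0 ≤ σH := Finset.sum_nonneg (fun x _ => hπt x)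
    have hσH1 : σH ≤ 1 := by
      rw [hσHdef, ← hπtsum]
      exact Finset.sum_le_sum_of_subset_of_nonneg (Finset.subset_univ H) (fun x _ _ => hπt x)
    have hmemL : ∀ (f : Fin m → X) (x : X), x ∈ L f ↔ ∃ i, f i = x := by
      intro f x
      rw [hLdef]
      simp [Finset.mem_image]
    by_cases hH : 1/4 ≤ σH
    · -- Case IIa
      have hind : ∀ f : Fin m → X, (if (∑ x ∈ L f, πt x) < q then P f else 0)
          ≤ P f * (if ∀ i, f i ∉ H then 1 else 0) := by
        intro f
        by_cases h : (∑ x ∈ L f, πt x) < q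
        · rw [if_pos h]
          have hHf : ∀ i, f i ∉ H := by
            intro i hiH
            have hq_le : q ≤ πt (f i) := (Finset.mem_filter.1 hiH).2
            have hmem : f i ∈ L f := (hmemL f (f i)).2 ⟨i, rfl⟩
            have hle : πt (f i) ≤ ∑ x ∈ L f, πt x :=
              Finset.single_le_sum (fun x _ => hπt x) hmem
            linarith
          rw [if_pos hHf, mul_one]
        · rw [if_neg h]
          exact mul_nonneg (hP0 f) (by split <;> norm_num)
      calc ∑ f : Fin m → X, (if (∑ x ∈ L f, πt x) < q then P f else 0)
          ≤ ∑ f : Fin m → X, P f * (if ∀ i, f i ∉ H then 1 else 0) :=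
            Finset.sum_le_sum (fun f _ => hind f)
        _ = (1 - σH)^m := by rw [hMiss H, hσHdef]
        _ ≤ (3/4 : ℝ)^m := pow_le_pow_left₀ (by linarith) (by linarith) m
        _ ≤ (3/4 : ℝ)^120 := pow_le_pow_of_le_one (by norm_num) (by norm_num) (by omega)
        _ ≤ 1/10 := auxJ
    · -- Case IIb
      push_neg at hH
      set Tl : Finset X := T \ H with hTldef
      have hTl_lb : ∀ x ∈ Tl, 1/(2*(n:ℝ)) ≤ πt x := by
        intro x hx
        have h1 := (Finset.mem_sdiff.1 hx).1
        rw [hTdef] at h1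
        exact (Finset.mem_filter.1 h1).2
      have hTl_ub : ∀ x ∈ Tl, πt x ≤ q := by
        intro x hx
        have h2 := (Finset.mem_sdiff.1 hx).2
        have h3 : ¬ q ≤ πt x := fun hq' => h2 (by rw [hHdef]; exact Finset.mem_filter.2 ⟨Finset.mem_univ x, hq'⟩)
        linarith [lt_of_not_ge h3]
      set σl : ℝ := ∑ x ∈ Tl, πt x with hσldef
      have hσl : 1/4 ≤ σl := by
        have hsplit : ∑ x ∈ T ∩ H, πt x + ∑ x ∈ T \ H, πt x = σ := by
          rw [hσdef]
          exact Finset.sum_inter_add_sum_sdiff T H πt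
        have hTH : ∑ x ∈ T ∩ H, πt x ≤ σH := by
          rw [hσHdef]
          exact Finset.sum_le_sum_of_subset_of_nonneg Finset.inter_subset_right
            (fun x _ _ => hπt x)
        have hfold : ∑ x ∈ T \ H, πt x = σl := by rw [hσldef, hTldef]
        linarith
      clear_value σl
      set e : X → ℝ := fun x => 1 - (1 - πt x)^m with hedef
      have he01 : ∀ x, 0 ≤ e x ∧ e x ≤ 1 := by
        intro x
        have h1 := (hM01 x).1
        have h2 := (hM01 x).2
        constructor
        · rw [hedef]; simp only []; linarith
        · rw [hedef]; simp only []; linarith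
      have hEZ : ∀ x : X, ∑ f : Fin m → X, P f * (1 - (if x ∈ L f then (0:ℝ) else 1)) = e x := by
        intro x
        have hexp : ∀ f : Fin m → X, P f * (1 - (if x ∈ L f then (0:ℝ) else 1))
            = P f - P f * (if x ∈ L f then (0:ℝ) else 1) := by intro f; ring
        rw [Finset.sum_congr rfl (fun f _ => hexp f), Finset.sum_sub_distrib, hPsum, hNx x, hedef]
      set μ : ℝ := ∑ x ∈ Tl, πt x * e x with hμdef
      have hμ0 : 0 ≤ μ := by
        rw [hμdef]
        exact Finset.sum_nonneg (fun x hx => mul_nonneg (hπt x) (he01 x).1)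
      -- lower bound on μ
      have hμ12 : 12 * q ≤ μ := by
        have hu0 : (0:ℝ) < 15*(p:ℝ)/n := by positivity
        have hu1 : 15*(p:ℝ)/n ≤ 1 := by
          rw [div_le_iff₀ hnR]; linarith
        have hd0 : (0:ℝ) < 1 + 4*(15*(p:ℝ)/n) := by linarith
        have hBle : 1 + 4*(15*(p:ℝ)/n) ≤ B^4 := by
          have hber := one_add_mul_le_pow (a := 15*(p:ℝ)/n) (by linarith) 4
          rw [hBdef]
          push_cast at hber
          linarith
        have hβ : 1/B^4 ≤ 1/(1 + 4*(15*(p:ℝ)/n)) := one_div_le_one_div_of_le hd0 hBle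
        have hstep : ∀ x ∈ Tl, 1 - 1/B^4 ≤ e x := by
          intro x hx
          have hM := hMx (πt x) (hTl_lb x hx) (hπt1 x)
          rw [hedef]
          simp only []
          linarith
        have hsum1 : σl * (1 - 1/B^4) ≤ μ := by
          rw [hμdef]
          calc σl * (1 - 1/B^4) = ∑ x ∈ Tl, πt x * (1 - 1/B^4) := by
                rw [hσldef, Finset.sum_mul]
            _ ≤ ∑ x ∈ Tl, πt x * e x :=
                Finset.sum_le_sum (fun x hx => mul_le_mul_of_nonneg_left (hstep x hx) (hπt x))
        have hfrac : (1:ℝ) - 1/(1 + 4*(15*(p:ℝ)/n)) = 4*(15*(p:ℝ)/n)/(1 + 4*(15*(p:ℝ)/n)) := by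
          field_simp
          ring
        have hBpos : (0:ℝ) ≤ 1 - 1/(1 + 4*(15*(p:ℝ)/n)) := by
          rw [hfrac]
          positivity
        calc 12*q = (15*(p:ℝ)/n)/5 := by rw [hqdef]; ring
          _ ≤ (15*(p:ℝ)/n)/(1 + 4*(15*(p:ℝ)/n)) :=
              div_le_div_of_nonneg_left hu0.le hd0 (by linarith)
          _ = (1/4) * (4*(15*(p:ℝ)/n)/(1 + 4*(15*(p:ℝ)/n))) := by ring
          _ = (1/4) * (1 - 1/(1 + 4*(15*(p:ℝ)/n))) := by rw [hfrac]
          _ ≤ σl * (1 - 1/(1 + 4*(15*(p:ℝ)/n))) := mul_le_mul_of_nonneg_right hσl hBpos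
          _ ≤ σl * (1 - 1/B^4) := mul_le_mul_of_nonneg_left (by linarith) (by linarith)
          _ ≤ μ := hsum1
      -- random variable Y
      set Y : (Fin m → X) → ℝ :=
        fun f => ∑ x ∈ Tl, πt x * (1 - (if x ∈ L f then (0:ℝ) else 1)) with hYdef
      have hYle : ∀ f : Fin m → X, Y f ≤ ∑ x ∈ L f, πt x := by
        intro f
        rw [hYdef]
        have e0 : ∀ x : X, πt x * (1 - (if x ∈ L f then (0:ℝ) else 1))
            = (if x ∈ L f then πt x else 0) := by
          intro x
          by_cases h : x ∈ L f
          · rw [if_pos h, if_pos h]; ring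
          · rw [if_neg h, if_neg h]; ring
        calc ∑ x ∈ Tl, πt x * (1 - (if x ∈ L f then (0:ℝ) else 1))
            = ∑ x ∈ Tl, (if x ∈ L f then πt x else 0) :=
              Finset.sum_congr rfl (fun x _ => e0 x)
          _ ≤ ∑ x ∈ (univ : Finset X), (if x ∈ L f then πt x else 0) :=
              Finset.sum_le_sum_of_subset_of_nonneg (Finset.subset_univ Tl)
                (fun x _ _ => by
                  by_cases h : x ∈ L f
                  · rw [if_pos h]; exact hπt x
                  · rw [if_neg h])
          _ = ∑ x ∈ L f, πt x := by rw [Finset.sum_ite_mem, Finset.univ_inter]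
      have hEY : ∑ f : Fin m → X, P f * Y f = μ := by
        calc ∑ f : Fin m → X, P f * Y f
            = ∑ f : Fin m → X, ∑ x ∈ Tl,
                πt x * (P f * (1 - (if x ∈ L f then (0:ℝ) else 1))) :=
              Finset.sum_congr rfl (fun f _ => by
                rw [hYdef, Finset.mul_sum]
                exact Finset.sum_congr rfl (fun x _ => by ring))
          _ = ∑ x ∈ Tl, ∑ f : Fin m → X,
                πt x * (P f * (1 - (if x ∈ L f then (0:ℝ) else 1))) := Finset.sum_comm
          _ = μ := by
              rw [hμdef]
              exact Finset.sum_congr rfl (fun x _ => by rw [← Finset.mul_sum, hEZ x])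
      -- pair probabilities
      have hNNxy : ∀ x y : X, x ≠ y →
          ∑ f : Fin m → X, P f * ((if x ∈ L f then (0:ℝ) else 1) * (if y ∈ L f then (0:ℝ) else 1))
            = (1 - (πt x + πt y))^m := by
        intro x y hxy
        have h1 : ∀ f : Fin m → X,
            (if x ∈ L f then (0:ℝ) else 1) * (if y ∈ L f then (0:ℝ) else 1)
              = (if ∀ i, f i ∉ ({x,y} : Finset X) then (1:ℝ) else 0) := by
          intro f
          have hmem : (∀ i, f i ∉ ({x,y} : Finset X)) ↔ (x ∉ L f ∧ y ∉ L f) := by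
            constructor
            · intro h
              constructor
              · intro hx
                obtain ⟨i, hi⟩ := (hmemL f x).1 hx
                exact h i (by rw [hi]; exact Finset.mem_insert_self x {y})
              · intro hy
                obtain ⟨i, hi⟩ := (hmemL f y).1 hy
                exact h i (by rw [hi]; exact Finset.mem_insert_of_mem (Finset.mem_singleton_self y))
            · rintro ⟨hx, hy⟩ i hmem'
              rcases Finset.mem_insert.1 hmem' with h | h
              · exact hx ((hmemL f x).2 ⟨i, h⟩)
              · exact hy ((hmemL f y).2 ⟨i, Finset.mem_singleton.1 h⟩)
          by_cases hx : x ∈ L f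
          · rw [if_pos hx, if_neg (fun hall => (hmem.1 hall).1 hx), zero_mul]
          · by_cases hy : y ∈ L f
            · rw [if_pos hy, if_neg (fun hall => (hmem.1 hall).2 hy), mul_zero]
            · rw [if_neg hx, if_neg hy, if_pos (hmem.2 ⟨hx, hy⟩), one_mul]
        rw [Finset.sum_congr rfl (fun f _ => by rw [h1 f]), hMiss ({x,y} : Finset X),
          Finset.sum_pair hxy]
      have hW2off : ∀ x y : X, x ≠ y →
          ∑ f : Fin m → X, P f * ((1 - (if x ∈ L f then (0:ℝ) else 1)) * (1 - (if y ∈ L f then (0:ℝ) else 1)))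
            ≤ e x * e y := by
        intro x y hxy
        have hexp : ∀ f : Fin m → X,
            P f * ((1 - (if x ∈ L f then (0:ℝ) else 1)) * (1 - (if y ∈ L f then (0:ℝ) else 1)))
              = P f - P f * (if x ∈ L f then (0:ℝ) else 1) - P f * (if y ∈ L f then (0:ℝ) else 1)
                + P f * ((if x ∈ L f then (0:ℝ) else 1) * (if y ∈ L f then (0:ℝ) else 1)) := by
          intro f; ring
        rw [Finset.sum_congr rfl (fun f _ => hexp f), Finset.sum_add_distrib,
          Finset.sum_sub_distrib, Finset.sum_sub_distrib, hPsum, hNx x, hNx y, hNNxy x y hxy]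
        have hab : πt x + πt y ≤ 1 := by
          have hsub : ∑ z ∈ ({x,y} : Finset X), πt z ≤ 1 := by
            rw [← hπtsum]
            exact Finset.sum_le_sum_of_subset_of_nonneg (Finset.subset_univ _)
              (fun z _ _ => hπt z)
          rw [Finset.sum_pair hxy] at hsub
          exact hsub
        have hMxy : (1 - (πt x + πt y))^m ≤ (1-πt x)^m * (1-πt y)^m := by
          calc (1 - (πt x + πt y))^m ≤ ((1-πt x)*(1-πt y))^m :=
                pow_le_pow_left₀ (by linarith)
                  (by nlinarith [mul_nonneg (hπt x) (hπt y)]) m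
            _ = (1-πt x)^m * (1-πt y)^m := mul_pow _ _ m
        have hex : e x = 1 - (1-πt x)^m := by rw [hedef]
        have hey : e y = 1 - (1-πt y)^m := by rw [hedef]
        rw [hex, hey]
        nlinarith [hMxy]
      have hdiag : ∀ x : X,
          ∑ f : Fin m → X, P f * ((1 - (if x ∈ L f then (0:ℝ) else 1)) * (1 - (if x ∈ L f then (0:ℝ) else 1)))
            = e x := by
        intro x
        have h1 : ∀ f : Fin m → X,
            (1 - (if x ∈ L f then (0:ℝ) else 1)) * (1 - (if x ∈ L f then (0:ℝ) else 1))
              = 1 - (if x ∈ L f then (0:ℝ) else 1) := by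
          intro f
          by_cases h : x ∈ L f
          · rw [if_pos h]; ring
          · rw [if_neg h]; ring
        rw [Finset.sum_congr rfl (fun f _ => by rw [h1 f]), hEZ x]
      -- second moment
      have hYsq : ∀ f : Fin m → X, P f * (Y f * Y f)
          = ∑ x ∈ Tl, ∑ y ∈ Tl, (πt x * πt y) *
              (P f * ((1 - (if x ∈ L f then (0:ℝ) else 1)) * (1 - (if y ∈ L f then (0:ℝ) else 1)))) := by
        intro f
        rw [hYdef]
        simp only []
        rw [Finset.sum_mul_sum, Finset.mul_sum]
        refine Finset.sum_congr rfl (fun x _ => ?_)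
        rw [Finset.mul_sum]
        refine Finset.sum_congr rfl (fun y _ => ?_)
        ring
      have hswap : ∑ f : Fin m → X, P f * (Y f * Y f)
          = ∑ x ∈ Tl, ∑ y ∈ Tl, (πt x * πt y) *
              (∑ f : Fin m → X, P f * ((1 - (if x ∈ L f then (0:ℝ) else 1)) * (1 - (if y ∈ L f then (0:ℝ) else 1)))) := by
        rw [Finset.sum_congr rfl (fun f _ => hYsq f), Finset.sum_comm]
        refine Finset.sum_congr rfl (fun x _ => ?_)
        rw [Finset.sum_comm]
        refine Finset.sum_congr rfl (fun y _ => ?_)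
        rw [← Finset.mul_sum]
      have hptw : ∀ x ∈ Tl, ∀ y ∈ Tl,
          (πt x * πt y) * (∑ f : Fin m → X, P f * ((1 - (if x ∈ L f then (0:ℝ) else 1)) * (1 - (if y ∈ L f then (0:ℝ) else 1))))
            ≤ (πt x * e x) * (πt y * e y) + (if x = y then q * (πt x * e x) else 0) := by
        intro x hx y hy
        by_cases hxy : x = y
        · subst hxy
          rw [if_pos rfl, hdiag x]
          have ha_q : πt x ≤ q := hTl_ub x hx
          have ha0 : 0 ≤ πt x := hπt x
          have he0 : 0 ≤ e x := (he01 x).1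
          have he1 : e x ≤ 1 := (he01 x).2
          have hkey : (0:ℝ) ≤ πt x * e x * (q - πt x * (1 - e x)) := by
            apply mul_nonneg (mul_nonneg ha0 he0)
            nlinarith
          nlinarith [hkey]
        · rw [if_neg hxy, add_zero]
          calc (πt x * πt y) * (∑ f : Fin m → X, P f * ((1 - (if x ∈ L f then (0:ℝ) else 1)) * (1 - (if y ∈ L f then (0:ℝ) else 1))))
              ≤ (πt x * πt y) * (e x * e y) :=
                mul_le_mul_of_nonneg_left (hW2off x y hxy) (mul_nonneg (hπt x) (hπt y))
            _ = (πt x * e x) * (πt y * e y) := by ring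
      have hEY2 : ∑ f : Fin m → X, P f * (Y f * Y f) ≤ μ*μ + q*μ := by
        rw [hswap]
        calc ∑ x ∈ Tl, ∑ y ∈ Tl, (πt x * πt y) *
                (∑ f : Fin m → X, P f * ((1 - (if x ∈ L f then (0:ℝ) else 1)) * (1 - (if y ∈ L f then (0:ℝ) else 1))))
            ≤ ∑ x ∈ Tl, ∑ y ∈ Tl,
                ((πt x * e x) * (πt y * e y) + (if x = y then q * (πt x * e x) else 0)) :=
              Finset.sum_le_sum (fun x hx => Finset.sum_le_sum (fun y hy => hptw x hx y hy))
          _ = ∑ x ∈ Tl, ((πt x * e x) * μ + q * (πt x * e x)) := by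
              refine Finset.sum_congr rfl (fun x hx => ?_)
              rw [Finset.sum_add_distrib, ← Finset.mul_sum, ← hμdef,
                Finset.sum_ite_eq Tl x (fun _ => q * (πt x * e x)), if_pos hx]
          _ = μ*μ + q*μ := by
              rw [Finset.sum_add_distrib, ← Finset.sum_mul, ← Finset.mul_sum, ← hμdef]
      -- variance bound and Chebyshev
      have hVar : ∑ f : Fin m → X, P f * (Y f - μ)^2 ≤ q*μ := by
        have hexp : ∀ f : Fin m → X, P f * (Y f - μ)^2
            = P f * (Y f * Y f) - 2*μ*(P f * Y f) + μ^2 * P f := by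
          intro f; ring
        rw [Finset.sum_congr rfl (fun f _ => hexp f), Finset.sum_add_distrib,
          Finset.sum_sub_distrib, ← Finset.mul_sum, ← Finset.mul_sum, hEY, hPsum]
        nlinarith [hEY2]
      have hcc0 : (0:ℝ) < μ - q := by linarith
      have hcc2 : (0:ℝ) < (μ - q)^2 := pow_pos hcc0 2
      have hmark2 : ∑ f : Fin m → X, (if (∑ x ∈ L f, πt x) < q then P f else 0)
          ≤ ∑ f : Fin m → X, P f * ((Y f - μ)^2 / (μ - q)^2) := by
        apply Finset.sum_le_sum
        intro f _
        by_cases h : (∑ x ∈ L f, πt x) < q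
        · rw [if_pos h]
          have hYf : Y f ≤ ∑ x ∈ L f, πt x := hYle f
          have h3 : (μ - q)^2 ≤ (Y f - μ)^2 := by nlinarith
          have h4 : 1 ≤ (Y f - μ)^2 / (μ - q)^2 := (one_le_div hcc2).2 h3
          exact le_mul_of_one_le_right (hP0 f) h4
        · rw [if_neg h]
          exact mul_nonneg (hP0 f) (div_nonneg (sq_nonneg _) (sq_nonneg _))
      have hsumdiv : ∑ f : Fin m → X, P f * ((Y f - μ)^2 / (μ - q)^2)
          = (∑ f : Fin m → X, P f * (Y f - μ)^2) / (μ - q)^2 := by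
        rw [Finset.sum_div]
        exact Finset.sum_congr rfl (fun f _ => by rw [mul_div_assoc])
      have hfinal : (∑ f : Fin m → X, P f * (Y f - μ)^2) / (μ - q)^2 ≤ 1/10 := by
        rw [div_le_iff₀ hcc2]
        have h10 : 10*(q*μ) ≤ (μ - q)^2 := by
          nlinarith [mul_le_mul_of_nonneg_right hμ12 hμ0]
        linarith [hVar]
      calc ∑ f : Fin m → X, (if (∑ x ∈ L f, πt x) < q then P f else 0)
          ≤ ∑ f : Fin m → X, P f * ((Y f - μ)^2 / (μ - q)^2) := hmark2
        _ = (∑ f : Fin m → X, P f * (Y f - μ)^2) / (μ - q)^2 := hsumdiv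
        _ ≤ 1/10 := hfinal
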